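/- Let N ≥ 2, s > 0, a > 0, D > 0, r > a, write P̄(s,x) = (a/(s·x))·exp(−(x−a)·√(s/D)), and let ρ : {1, …, ⌊N/2⌋} → ℝ with ρ_m > a for all m. Index the FARs by i ∈ ZMod N and define the circular distance d(i,j) = min(|i−j| mod N, N − (|i−j| mod N)) for i ≠ j. Suppose P : ZMod N → ℝ satisfies P̄(s,r) − Pᵢ = s·∑_{j≠i} Pⱼ·P̄(s, ρ_{d(i,j)}) for every i, and that the N×N matrix A with A_{ii} = 1 and A_{ij} = s·P̄(s, ρ_{d(j,i)}) for i ≠ j is invertible. Then for every i, Pᵢ = P̄(s,r)/(1 + s·∑_{m=1}^{N−1} P̄(s, ρ_{min(m, N−m)})); equivalently, Pᵢ = P̄(s,r)/(1 + ∑_{m=1}^{δ} 2·s·P̄(s,ρ_m)) when N is odd and Pᵢ = P̄(s,r)/(1 + ∑_{m=1}^{δ−1} 2·s·P̄(s,ρ_m) + s·P̄(s,ρ_δ)) when N is even, where δ = ⌈(N−1)/2⌉. -/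

import Mathlib

open Matrix

/-- Laplace transform of the single-FAR hitting probability:
`P̄(s,x) = (a/(s·x))·exp(−(x−a)·√(s/D))`. -/
noncomputable def Pbar (a D s x : ℝ) : ℝ :=
  a / (s * x) * Real.exp (-(x - a) * Real.sqrt (s / D))

/-- Circular index distance on `ZMod N`. -/
def circDist (N : ℕ) [NeZero N] (i j : ZMod N) : ℕ :=
  min (i - j).val (N - (i - j).val)

lemma Pbar_pos {a D s x : ℝ} (hs : 0 < s) (ha : 0 < a) (hx : 0 < x) :
    0 < Pbar a D s x := by
  unfold Pbar
  positivity

lemma circDist_symm (N : ℕ) [NeZero N] (i j : ZMod N) (h : j ≠ i) :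
    circDist N i j = circDist N j i := by
  unfold circDist
  have h1 : i - j ≠ 0 := sub_ne_zero.mpr fun hh => h hh.symm
  have h2 : j - i = -(i - j) := by ring
  rw [h2, ZMod.neg_val, if_neg h1]
  have h3 : (i - j).val < N := ZMod.val_lt _
  have h4 : (i - j).val ≠ 0 := fun hh => h1 ((ZMod.val_eq_zero _).mp hh)
  omega

lemma sum_circ (N : ℕ) [NeZero N] (i : ZMod N) (F : ℕ → ℝ) :
    ∑ j ∈ Finset.univ.filter (fun j => j ≠ i), F (circDist N j i)
      = ∑ m ∈ Finset.Icc 1 (N - 1), F (min m (N - m)) := by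
  have hN : 0 < N := Nat.pos_of_ne_zero (NeZero.ne N)
  refine Finset.sum_nbij' (fun j => (j - i).val) (fun m => i + (m : ZMod N)) ?_ ?_ ?_ ?_ ?_
  · intro j hj
    simp only [Finset.mem_filter, Finset.mem_univ, true_and] at hj
    have h1 : j - i ≠ 0 := sub_ne_zero.mpr hj
    have h2 : (j - i).val < N := ZMod.val_lt _
    have h3 : (j - i).val ≠ 0 := fun hh => h1 ((ZMod.val_eq_zero _).mp hh)
    simp only [Finset.mem_Icc]; omega
  · intro m hm
    simp only [Finset.mem_Icc] at hm
    simp only [Finset.mem_filter, Finset.mem_univ, true_and]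
    intro hh
    have : (m : ZMod N) = 0 := by
      have := congrArg (fun x => x - i) hh
      simpa using this
    rw [ZMod.natCast_eq_zero_iff] at this
    have := Nat.le_of_dvd (by omega) this
    omega
  · intro j hj
    show i + (((j - i).val : ℕ) : ZMod N) = j
    have : ((j - i).val : ZMod N) = j - i := ZMod.natCast_rightInverse (j - i)
    rw [this]; ring
  · intro m hm
    simp only [Finset.mem_Icc] at hm
    show (i + (m : ZMod N) - i).val = m
    have h1 : i + (m : ZMod N) - i = (m : ZMod N) := by ring
    rw [h1, ZMod.val_cast_of_lt (by omega)]
  · intro j hj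
    unfold circDist
    rfl

lemma sum_min_split (N : ℕ) (hN : 2 ≤ N) (f : ℕ → ℝ) :
    ∑ m ∈ Finset.Icc 1 (N - 1), f (min m (N - m))
      = ∑ m ∈ Finset.Icc 1 (N / 2), f m + ∑ m ∈ Finset.Icc 1 ((N - 1) / 2), f m := by
  have key : ∑ m ∈ Finset.Ioc 0 (N / 2), f (min m (N - m))
      + ∑ m ∈ Finset.Ioc (N / 2) (N - 1), f (min m (N - m))
      = ∑ m ∈ Finset.Ioc 0 (N - 1), f (min m (N - m)) :=
    Finset.sum_Ioc_consecutive _ (by omega) (by omega)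
  have e1 : ∑ m ∈ Finset.Ioc 0 (N / 2), f (min m (N - m))
      = ∑ m ∈ Finset.Ioc 0 (N / 2), f m := by
    refine Finset.sum_congr rfl fun m hm => ?_
    simp only [Finset.mem_Ioc] at hm
    congr 1
    omega
  have e2 : ∑ m ∈ Finset.Ioc (N / 2) (N - 1), f (min m (N - m))
      = ∑ m ∈ Finset.Ioc 0 ((N - 1) / 2), f m := by
    refine Finset.sum_nbij' (fun m => N - m) (fun m => N - m) ?_ ?_ ?_ ?_ ?_
    · intro m hm
      simp only [Finset.mem_Ioc] at hm ⊢; omega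
    · intro m hm
      simp only [Finset.mem_Ioc] at hm ⊢; omega
    · intro m hm
      simp only [Finset.mem_Ioc] at hm
      show N - (N - m) = m; omega
    · intro m hm
      simp only [Finset.mem_Ioc] at hm
      show N - (N - m) = m; omega
    · intro m hm
      simp only [Finset.mem_Ioc] at hm
      show f (min m (N - m)) = f (N - m)
      congr 1
      omega
  have i1 : Finset.Icc 1 (N - 1) = Finset.Ioc 0 (N - 1) := Finset.Icc_add_one_left_eq_Ioc 0 (N - 1)
  have i2 : Finset.Icc 1 (N / 2) = Finset.Ioc 0 (N / 2) := Finset.Icc_add_one_left_eq_Ioc 0 (N / 2)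
  have i3 : Finset.Icc 1 ((N - 1) / 2) = Finset.Ioc 0 ((N - 1) / 2) :=
    Finset.Icc_add_one_left_eq_Ioc 0 ((N - 1) / 2)
  rw [i1, i2, i3, ← key, e1, e2]

/-- Conjecture 1 (Laplace domain, equations lNrxodd/lNrxeven): in a UCA of `N`
FARs, the renewal system forces every `Pᵢ` to equal
`P̄(s,r)/(1 + s·∑_{m=1}^{N−1} P̄(s,ρ_{min(m,N−m)}))`, which splits into the
odd/even forms with `δ = ⌈(N−1)/2⌉`. -/
theorem stmt9 (N : ℕ) [NeZero N] (hN : 2 ≤ N) (s a D r : ℝ)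
    (hs : 0 < s) (ha : 0 < a) (hD : 0 < D) (hr : a < r)
    (ρ : ℕ → ℝ) (hρ : ∀ m, 1 ≤ m → m ≤ N / 2 → a < ρ m)
    (P : ZMod N → ℝ)
    (hP : ∀ i, Pbar a D s r - P i =
      s * ∑ j ∈ Finset.univ.filter (fun j => j ≠ i), P j * Pbar a D s (ρ (circDist N i j)))
    (A : Matrix (ZMod N) (ZMod N) ℝ)
    (hA : A = Matrix.of fun i j =>
      if i = j then 1 else s * Pbar a D s (ρ (circDist N j i)))
    (hInv : IsUnit A.det) :
    (∀ i, P i = Pbar a D s r /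
        (1 + s * ∑ m ∈ Finset.Icc 1 (N - 1), Pbar a D s (ρ (min m (N - m))))) ∧
    (Odd N → ∀ i, P i = Pbar a D s r /
        (1 + ∑ m ∈ Finset.Icc 1 (N / 2), 2 * s * Pbar a D s (ρ m))) ∧
    (Even N → ∀ i, P i = Pbar a D s r /
        (1 + ∑ m ∈ Finset.Icc 1 (N / 2 - 1), 2 * s * Pbar a D s (ρ m) +
          s * Pbar a D s (ρ (N / 2)))) := by
  set c : ℝ := Pbar a D s r with hc
  set g : ℕ → ℝ := fun m => Pbar a D s (ρ m) with hg
  set S : ℝ := ∑ m ∈ Finset.Icc 1 (N - 1), g (min m (N - m)) with hS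
  -- positivity of terms
  have hgpos : ∀ m ∈ Finset.Icc 1 (N - 1), 0 < g (min m (N - m)) := by
    intro m hm
    simp only [Finset.mem_Icc] at hm
    have h1 : 1 ≤ min m (N - m) := by omega
    have h2 : min m (N - m) ≤ N / 2 := by omega
    exact Pbar_pos hs ha (lt_trans ha (hρ _ h1 h2))
  have hSpos : 0 ≤ S := Finset.sum_nonneg fun m hm => le_of_lt (hgpos m hm)
  have hden : (0:ℝ) < 1 + s * S := by positivity
  set p : ℝ := c / (1 + s * S) with hp
  -- A *ᵥ P = A *ᵥ (const p)
  have hrow : ∀ (v : ZMod N → ℝ) (i : ZMod N), (A *ᵥ v) i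
      = v i + s * ∑ j ∈ Finset.univ.filter (fun j => j ≠ i), v j * g (circDist N j i) := by
    intro v i
    rw [hA]
    simp only [Matrix.mulVec, dotProduct, Matrix.of_apply]
    rw [← Finset.add_sum_erase _ _ (Finset.mem_univ i), if_pos rfl, one_mul]
    congr 1
    rw [Finset.mul_sum]
    rw [show Finset.univ.filter (fun j => j ≠ i) = Finset.univ.erase i by
      ext j; simp [Finset.mem_erase, and_comm]]
    refine Finset.sum_congr rfl fun j hj => ?_
    rw [if_neg (fun hh => (Finset.mem_erase.mp hj).1 hh.symm)]
    ring
  have hAP : ∀ i, (A *ᵥ P) i = c := by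
    intro i
    rw [hrow]
    have := hP i
    have e : ∑ j ∈ Finset.univ.filter (fun j => j ≠ i), P j * g (circDist N j i)
        = ∑ j ∈ Finset.univ.filter (fun j => j ≠ i), P j * Pbar a D s (ρ (circDist N i j)) := by
      refine Finset.sum_congr rfl fun j hj => ?_
      simp only [Finset.mem_filter, Finset.mem_univ, true_and] at hj
      rw [circDist_symm N i j hj]
    rw [e, ← this]; ring
  have hAQ : ∀ i, (A *ᵥ fun _ => p) i = c := by
    intro i
    rw [hrow]
    have e : ∑ j ∈ Finset.univ.filter (fun j => j ≠ i), p * g (circDist N j i)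
        = p * S := by
      rw [← Finset.mul_sum, hS, sum_circ N i g]
    rw [e, hp]
    field_simp
  have hPQ : P = fun _ => p := by
    have h1 : A *ᵥ P = A *ᵥ fun _ => p := by
      funext i; rw [hAP i, hAQ i]
    have h2 := congrArg (fun v => A⁻¹ *ᵥ v) h1
    simpa [Matrix.mulVec_mulVec, Matrix.nonsing_inv_mul A hInv] using h2
  have main : ∀ i, P i = c / (1 + s * S) := fun i => by rw [hPQ]
  refine ⟨main, ?_, ?_⟩
  · intro hodd i
    rw [main i]
    congr 1
    have h2 : (N - 1) / 2 = N / 2 := by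
      obtain ⟨k, hk⟩ := hodd; omega
    rw [hS, sum_min_split N hN g, h2]
    simp only [hg]
    rw [← Finset.mul_sum]
    ring
  · intro heven i
    rw [main i]
    congr 1
    obtain ⟨d, hd⟩ : ∃ d, N / 2 = d + 1 := ⟨N / 2 - 1, by omega⟩
    have h2 : (N - 1) / 2 = d := by
      obtain ⟨k, hk⟩ := heven; omega
    have h5 : N / 2 - 1 = d := by omega
    rw [hS, sum_min_split N hN g, h2, h5, hd, Finset.sum_Icc_succ_top (by omega) g]
    simp only [hg]
    rw [← Finset.mul_sum]
    ring
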